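/- arXiv:1311.6024 — 2 statements merged into one kernel-verified Lean document; each statement's English description precedes it below -/
import Mathlib

section
/- Consider the shortest-path metric of a single ladder graph L_h rooted at r. Then: (a) every rooted path covering all 2(2h−1) non-root nodes of L_h has regret at least 2h−1; (b) for each i ∈ {1, …, 2h−1}, the rooted path P_i — defined as r, u_1, …, u_i, v_i, v_{i+1}, …, v_{2h−1} if i is odd, and r, v_1, …, v_i, u_i, u_{i+1}, …, u_{2h−1} if i is even — has regret exactly 1, and every non-root node of L_h lies on exactly h of the paths P_1, …, P_{2h−1}. -/
/-- Total cost of traversing the list of nodes in order. -/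
def pathCost {α : Type*} (c : α → α → ℝ) : List α → ℝ
  | [] => 0
  | [_] => 0
  | a :: b :: l => c a b + pathCost c (b :: l)

/-- A rooted path: a list of distinct nodes starting at the root `r`. -/
def IsRootedPath {α : Type*} (r : α) (w : List α) : Prop :=
  w.head? = some r ∧ w.Nodup

/-- The regret of a rooted path: its cost minus the distance from `r` to its last node. -/
def pathRegret {α : Type*} (c : α → α → ℝ) (r : α) (w : List α) : ℝ :=
  pathCost c w - c r (w.getLastD r)

/-- Extended-real cost of a walk, given edge weights `g` (with `⊤` for non-edges). -/
noncomputable def walkCostE {β : Type*} (g : β → β → ENNReal) : List β → ENNReal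
  | [] => 0
  | [_] => 0
  | a :: b :: l => g a b + walkCostE g (b :: l)

/-- Shortest-path distance induced by edge weights `g`. -/
noncomputable def spDist {β : Type*} (g : β → β → ENNReal) (u v : β) : ℝ :=
  (⨅ l ∈ {l : List β | l.head? = some u ∧ l.getLast? = some v}, walkCostE g l).toReal

/-- Nodes of `copies` disjoint copies of the ladder graph `L_h` sharing a common root:
`Sum.inl ()` is the root `r`; `Sum.inr (j, i, b)` is `u_{i+1}` (if `b = true`) or `v_{i+1}`
(if `b = false`) of copy `j`. -/
abbrev LadderNode (h copies : ℕ) := Unit ⊕ (Fin copies × Fin (2 * h - 1) × Bool)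

/-- Edge weights of `copies` disjoint copies of the ladder graph `L_h` sharing the root:
"vertical" edges `(u_i,u_{i+1})`, `(v_i,v_{i+1})` (within one copy, with `u_0 = v_0 = r`)
cost `h`, "rung" edges `(u_i,v_i)` cost `1`, everything else is a non-edge (`⊤`). -/
noncomputable def ladderEdges (h copies : ℕ) :
    LadderNode h copies → LadderNode h copies → ENNReal
  | Sum.inl _, Sum.inl _ => ⊤
  | Sum.inl _, Sum.inr (_, i, _) => if (i : ℕ) = 0 then (h : ENNReal) else ⊤
  | Sum.inr (_, i, _), Sum.inl _ => if (i : ℕ) = 0 then (h : ENNReal) else ⊤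
  | Sum.inr (j, i, b), Sum.inr (j', i', b') =>
      if j = j' ∧ b = b' ∧ ((i : ℕ) + 1 = (i' : ℕ) ∨ (i' : ℕ) + 1 = (i : ℕ)) then (h : ENNReal)
      else if j = j' ∧ i = i' ∧ b ≠ b' then 1 else ⊤

/-- The shortest-path metric of `copies` disjoint copies of `L_h` sharing the root. -/
noncomputable def ladderMetric (h copies : ℕ) :
    LadderNode h copies → LadderNode h copies → ℝ :=
  spDist (ladderEdges h copies)

/-- The node `u_{t+1}` (if `b = true`) resp. `v_{t+1}` (if `b = false`) of a single
ladder `L_h` (so `t` is a 0-based index). -/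
def ladNode (h : ℕ) (t : ℕ) (b : Bool) : LadderNode h 1 :=
  if ht : t < 2 * h - 1 then Sum.inr (0, ⟨t, ht⟩, b) else Sum.inl ()

/-- The path `P_i` (for `1 ≤ i ≤ 2h−1`):
`r, u_1, …, u_i, v_i, v_{i+1}, …, v_{2h−1}` if `i` is odd, and
`r, v_1, …, v_i, u_i, u_{i+1}, …, u_{2h−1}` if `i` is even. -/
def ladderPath (h i : ℕ) : List (LadderNode h 1) :=
  Sum.inl () ::
    (if i % 2 = 1 then
      ((List.range i).map fun t => ladNode h t true)
        ++ ((List.range' (i - 1) (2 * h - i)).map fun t => ladNode h t false)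
    else
      ((List.range i).map fun t => ladNode h t false)
        ++ ((List.range' (i - 1) (2 * h - i)).map fun t => ladNode h t true))

/-- Decidability of list membership from decidable equality (helper instance). -/
instance listDecidableMem {γ : Type*} [DecidableEq γ] (v : γ) (l : List γ) :
    Decidable (v ∈ l) :=
  List.rec (.isFalse (by simp))
    (fun a l ih => decidable_of_iff (v = a ∨ v ∈ l) (by simp [eq_comm])) l

namespace Ladder

/-- row of a node: 0 for root, i+1 for `Sum.inr (_, i, _)`. -/
def row {h c : ℕ} : LadderNode h c → ℕ
  | Sum.inl _ => 0
  | Sum.inr (_, i, _) => (i : ℕ) + 1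

/-- side of a node (arbitrary for root). -/
def side {h c : ℕ} : LadderNode h c → Bool
  | Sum.inl _ => true
  | Sum.inr (_, _, b) => b

/-- crossing indicator. -/
def crossN {h c : ℕ} : LadderNode h c → LadderNode h c → ℕ
  | Sum.inr (_, _, b), Sum.inr (_, _, b') => if b = b' then 0 else 1
  | _, _ => 0

/-- the explicit distance function. -/
def dN (h : ℕ) (x y : LadderNode h 1) : ℕ :=
  Nat.dist (row x) (row y) * h + crossN x y

lemma dN_self (h : ℕ) (x : LadderNode h 1) : dN h x x = 0 := by
  rcases x with _ | ⟨j, i, b⟩ <;> simp [dN, crossN, Nat.dist_self]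

lemma crossN_le_one {h c : ℕ} (x y : LadderNode h c) : crossN x y ≤ 1 := by
  rcases x with _ | ⟨j, i, b⟩ <;> rcases y with _ | ⟨j', i', b'⟩ <;>
    simp [crossN] <;> split <;> simp

lemma row_pos_iff {h c : ℕ} (x : LadderNode h c) : x ≠ Sum.inl () ↔ 1 ≤ row x := by
  rcases x with ⟨⟨⟩⟩ | ⟨j, i, b⟩ <;> simp [row]

lemma arith1 (h A B C ca cb cc : ℕ) (hA : A ≤ B + C) (hca : ca ≤ cb + cc) :
    A*h+ca ≤ (B*h+cb)+(C*h+cc) := by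
  have : A * h ≤ (B+C) * h := Nat.mul_le_mul_right _ hA
  have : (B+C)*h = B*h + C*h := by ring
  omega

lemma arith2 (h A B C ca : ℕ) (hh : 1 ≤ h) (hA : A + 2 ≤ B + C) (hca : ca ≤ 1) :
    A*h+ca ≤ B*h + C*h := by
  have h1 : (A+2) * h ≤ (B+C) * h := Nat.mul_le_mul_right _ hA
  have h2 : (A+2)*h = A*h + 2*h := by ring
  have h3 : (B+C)*h = B*h + C*h := by ring
  omega

lemma dN_triangle {h : ℕ} (hh : 1 ≤ h) (x y z : LadderNode h 1) :
    dN h x z ≤ dN h x y + dN h y z := by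
  have hd := Nat.dist.triangle_inequality (row x) (row y) (row z)
  by_cases hc : crossN x z ≤ crossN x y + crossN y z
  · exact arith1 _ _ _ _ _ _ _ hd hc
  · -- then x, z are inr with different sides and y is root
    push_neg at hc
    rcases x with ⟨⟨⟩⟩ | ⟨j, i, b⟩
    · rcases z with _ | _ <;> simp [crossN] at hc
    rcases z with ⟨⟨⟩⟩ | ⟨j₂, i₂, b₂⟩
    · simp [crossN] at hc
    rcases y with ⟨⟨⟩⟩ | ⟨j₁, i₁, b₁⟩
    · -- y root
      have h1 : crossN (Sum.inr (j,i,b) : LadderNode h 1) (Sum.inl ()) = 0 := rfl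
      have h2 : crossN (Sum.inl () : LadderNode h 1) (Sum.inr (j₂,i₂,b₂)) = 0 := rfl
      have hrx : row (Sum.inr (j,i,b) : LadderNode h 1) = (i:ℕ)+1 := rfl
      have hrz : row (Sum.inr (j₂,i₂,b₂) : LadderNode h 1) = (i₂:ℕ)+1 := rfl
      have hry : row (Sum.inl () : LadderNode h 1) = 0 := rfl
      unfold dN
      rw [h1, h2, hrx, hrz, hry, Nat.add_zero, Nat.add_zero]
      refine arith2 _ _ _ _ _ hh ?_ (crossN_le_one _ _)
      simp [Nat.dist]; omega
    · -- y inr: contradiction with hc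
      exfalso
      have : crossN (Sum.inr (j,i,b) : LadderNode h 1) (Sum.inr (j₂,i₂,b₂))
          ≤ crossN (Sum.inr (j,i,b) : LadderNode h 1) (Sum.inr (j₁,i₁,b₁))
            + crossN (Sum.inr (j₁,i₁,b₁) : LadderNode h 1) (Sum.inr (j₂,i₂,b₂)) := by
        simp only [crossN]
        rcases b <;> rcases b₁ <;> rcases b₂ <;> simp
      omega

end Ladder
namespace Ladder

lemma dN_le_edge {h : ℕ} (hh : 1 ≤ h) (x y : LadderNode h 1) :
    (dN h x y : ENNReal) ≤ ladderEdges h 1 x y := by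
  rcases x with ⟨⟨⟩⟩ | ⟨j, i, b⟩ <;> rcases y with ⟨⟨⟩⟩ | ⟨j', i', b'⟩
  · simp [ladderEdges]
  · simp only [ladderEdges]
    split
    · next h0 =>
      have : dN h (Sum.inl ()) (Sum.inr (j', i', b')) = h := by
        simp [dN, crossN, row, h0, Nat.dist]
      rw [this]
    · exact le_top
  · simp only [ladderEdges]
    split
    · next h0 =>
      have : dN h (Sum.inr (j, i, b)) (Sum.inl ()) = h := by
        simp [dN, crossN, row, h0, Nat.dist]
      rw [this]
    · exact le_top
  · simp only [ladderEdges]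
    split
    · next h0 =>
      obtain ⟨hj, hb, hi⟩ := h0
      have : dN h (Sum.inr (j, i, b)) (Sum.inr (j', i', b')) = h := by
        subst hb
        have : Nat.dist ((i:ℕ)+1) ((i':ℕ)+1) = 1 := by simp [Nat.dist]; omega
        simp [dN, crossN, row, this]
      rw [this]
    · split
      · next h1 =>
        obtain ⟨hj, hi, hb⟩ := h1
        have : dN h (Sum.inr (j, i, b)) (Sum.inr (j', i', b')) = 1 := by
          subst hi
          simp [dN, crossN, row, Nat.dist_self, hb]
        rw [this]
        simp
      · exact le_top

lemma walk_lb {h : ℕ} (hh : 1 ≤ h) :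
    ∀ (l : List (LadderNode h 1)) (u v : LadderNode h 1),
      l.head? = some u → l.getLast? = some v →
      (dN h u v : ENNReal) ≤ walkCostE (ladderEdges h 1) l := by
  intro l
  induction l with
  | nil => intro u v h1 h2; simp at h1
  | cons a t ih =>
    intro u v h1 h2
    have hu : u = a := by simp at h1; exact h1.symm
    subst hu
    match t, h2, ih with
    | [], h2, _ =>
      simp at h2
      subst h2
      simp [walkCostE, dN_self]
    | b :: t', h2, ih =>
      have h2' : (b :: t').getLast? = some v := by
        rw [List.getLast?_cons_cons] at h2; exact h2
      have step := ih b v rfl h2'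
      have tri : (dN h u v : ENNReal) ≤ (dN h u b : ENNReal) + (dN h b v : ENNReal) := by
        rw [← Nat.cast_add]
        exact_mod_cast dN_triangle hh u b v
      calc (dN h u v : ENNReal) ≤ (dN h u b : ENNReal) + (dN h b v : ENNReal) := tri
        _ ≤ ladderEdges h 1 u b + walkCostE (ladderEdges h 1) (b :: t') :=
            add_le_add (dN_le_edge hh u b) step
        _ = walkCostE (ladderEdges h 1) (u :: b :: t') := rfl

end Ladder
namespace Ladder

lemma walkCostE_cons_cons {β : Type*} (g : β → β → ENNReal) (x y : β) (l : List β) :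
    walkCostE g (x :: y :: l) = g x y + walkCostE g (y :: l) := rfl

lemma walkCostE_append {β : Type*} (g : β → β → ENNReal) :
    ∀ (l1 l2 : List β) (x y : β), l1.getLast? = some x → l2.head? = some y →
      walkCostE g (l1 ++ l2) = walkCostE g l1 + g x y + walkCostE g l2 := by
  intro l1
  induction l1 with
  | nil => intro l2 x y h1 h2; simp at h1
  | cons a t ih =>
    intro l2 x y h1 h2
    match t with
    | [] =>
      simp at h1
      subst h1
      match l2, h2 with
      | b :: t2, h2 =>
        simp at h2
        subst h2
        simp [walkCostE]
    | b :: t' =>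
      rw [List.getLast?_cons_cons] at h1
      have := ih l2 x y h1 h2
      show g a b + walkCostE g ((b :: t') ++ l2) = (g a b + walkCostE g (b :: t')) + g x y + walkCostE g l2
      rw [this]; ring

lemma ladderEdges_symm (h c : ℕ) (x y : LadderNode h c) :
    ladderEdges h c x y = ladderEdges h c y x := by
  rcases x with ⟨⟨⟩⟩ | ⟨j, i, b⟩ <;> rcases y with ⟨⟨⟩⟩ | ⟨j', i', b'⟩ <;>
    simp only [ladderEdges]
  · split
    · next hc =>
      obtain ⟨h1, h2, h3⟩ := hc
      rw [if_pos ⟨h1.symm, h2.symm, h3.symm⟩]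
    · next hc =>
      split
      · next hc2 =>
        obtain ⟨h1, h2, h3⟩ := hc2
        rw [if_neg, if_pos ⟨h1.symm, h2.symm, Ne.symm h3⟩]
        intro ⟨g1, g2, g3⟩
        exact hc ⟨g1.symm, g2.symm, g3.symm⟩
      · next hc2 =>
        rw [if_neg, if_neg]
        · intro ⟨g1, g2, g3⟩
          exact hc2 ⟨g1.symm, g2.symm, Ne.symm g3⟩
        · intro ⟨g1, g2, g3⟩
          exact hc ⟨g1.symm, g2.symm, g3.symm⟩

lemma walkCostE_reverse {h c : ℕ} :
    ∀ (l : List (LadderNode h c)),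
      walkCostE (ladderEdges h c) l.reverse = walkCostE (ladderEdges h c) l := by
  intro l
  induction l with
  | nil => rfl
  | cons a t ih =>
    match t, ih with
    | [], _ => rfl
    | b :: t', ih =>
      rw [List.reverse_cons]
      have hlast : (b :: t').reverse.getLast? = some b := by
        rw [List.getLast?_reverse]; rfl
      rw [walkCostE_append _ _ [a] b a hlast rfl, ih]
      show _ = ladderEdges h c a b + _
      rw [ladderEdges_symm h c b a]
      simp [walkCostE]
      ring

/-- cost of an ascending chain on one side. -/
lemma chain_cost {h : ℕ} (b : Bool) :
    ∀ (k a : ℕ), a + k + 1 ≤ 2*h - 1 →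
      walkCostE (ladderEdges h 1) ((List.range' a (k+1)).map (fun t => ladNode h t b))
        = k * h := by
  intro k
  induction k with
  | zero => intro a ha; simp [walkCostE]
  | succ k ih =>
    intro a ha
    have h1 : a < 2*h-1 := by omega
    have h2 : a+1 < 2*h-1 := by omega
    have e1 : ladNode h a b = Sum.inr (0, ⟨a, h1⟩, b) := dif_pos h1
    have e2 : ladNode h (a+1) b = Sum.inr (0, ⟨a+1, h2⟩, b) := dif_pos h2
    have hr1 : List.range' a (k+1+1) = a :: List.range' (a+1) (k+1) := List.range'_succ
    have hr2 : List.range' (a+1) (k+1) = (a+1) :: List.range' (a+2) k := List.range'_succ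
    have hcost : ladderEdges h 1 (ladNode h a b) (ladNode h (a+1) b) = h := by
      rw [e1, e2]
      simp [ladderEdges]
    have ihv := ih (a+1) (by omega)
    rw [hr2, List.map_cons] at ihv
    rw [hr1, hr2, List.map_cons, List.map_cons, walkCostE_cons_cons, hcost, ihv]
    push_cast
    ring

lemma chain_head {h : ℕ} (b : Bool) (k a : ℕ) :
    (((List.range' a (k+1)).map (fun t => ladNode h t b)).head? = some (ladNode h a b)) := by
  rw [List.range'_succ]; rfl

lemma chain_last {h : ℕ} (b : Bool) :
    ∀ (k a : ℕ), (((List.range' a (k+1)).map (fun t => ladNode h t b)).getLast? = some (ladNode h (a+k) b)) := by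
  intro k
  induction k with
  | zero => intro a; rw [List.range'_succ]; rfl
  | succ k ih =>
    intro a
    have h1 : List.range' a (k+1+1) = a :: List.range' (a+1) (k+1) := List.range'_succ
    rw [h1, List.map_cons]
    have h2 : List.range' (a+1) (k+1) = (a+1) :: List.range' (a+2) k := List.range'_succ
    rw [h2, List.map_cons, List.getLast?_cons_cons]
    have := ih (a+1)
    rw [h2, List.map_cons] at this
    rw [show a+(k+1) = a+1+k by omega]
    exact this

end Ladder
namespace Ladder

lemma walkCostE_cons {β : Type*} (g : β → β → ENNReal) (a : β) (L : List β) (x : β)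
    (hx : L.head? = some x) : walkCostE g (a :: L) = g a x + walkCostE g L := by
  have := walkCostE_append g [a] L a x rfl hx
  simpa [walkCostE] using this

lemma getLast?_cons_of_ne_nil {β : Type*} (a : β) {L : List β} (hL : L ≠ []) :
    (a :: L).getLast? = L.getLast? := by
  match L with
  | [] => exact absurd rfl hL
  | b :: t => exact List.getLast?_cons_cons

lemma walk_same_side {h : ℕ} (hh : 1 ≤ h) (i i' : ℕ) (hi : i < 2*h-1) (hi' : i' < 2*h-1)
    (b : Bool) :
    ∃ l : List (LadderNode h 1), l.head? = some (ladNode h i b) ∧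
      l.getLast? = some (ladNode h i' b) ∧
      walkCostE (ladderEdges h 1) l = (Nat.dist i i' : ENNReal) * h := by
  rcases le_or_gt i i' with hle | hlt
  · refine ⟨(List.range' i (i'-i+1)).map (fun t => ladNode h t b), chain_head b _ _, ?_, ?_⟩
    · have := chain_last (h := h) b (i'-i) i
      rwa [show i + (i'-i) = i' by omega] at this
    · rw [chain_cost b (i'-i) i (by omega)]
      have : Nat.dist i i' = i' - i := by simp [Nat.dist]; omega
      rw [this]
  · refine ⟨((List.range' i' (i-i'+1)).map (fun t => ladNode h t b)).reverse, ?_, ?_, ?_⟩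
    · rw [List.head?_reverse]
      have := chain_last (h := h) b (i-i') i'
      rwa [show i' + (i-i') = i by omega] at this
    · rw [List.getLast?_reverse]
      exact chain_head b _ _
    · rw [walkCostE_reverse, chain_cost b (i-i') i' (by omega)]
      have : Nat.dist i i' = i - i' := by simp [Nat.dist]; omega
      rw [this]

lemma walk_from_root {h : ℕ} (hh : 1 ≤ h) (i : ℕ) (hi : i < 2*h-1) (b : Bool) :
    ∃ l : List (LadderNode h 1), l.head? = some (Sum.inl ()) ∧
      l.getLast? = some (ladNode h i b) ∧
      walkCostE (ladderEdges h 1) l = ((i+1 : ℕ) : ENNReal) * h := by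
  refine ⟨Sum.inl () :: (List.range' 0 (i+1)).map (fun t => ladNode h t b), rfl, ?_, ?_⟩
  · rw [getLast?_cons_of_ne_nil _ (by simp [List.range'_succ])]
    have := chain_last (h := h) b i 0
    rwa [Nat.zero_add] at this
  · rw [walkCostE_cons _ _ _ _ (chain_head b i 0), chain_cost b i 0 (by omega)]
    have h0 : 0 < 2*h-1 := by omega
    have : ladNode h 0 b = Sum.inr (0, ⟨0, h0⟩, b) := dif_pos h0
    rw [this]
    show (if (0:ℕ) = 0 then (h:ENNReal) else ⊤) + _ = _
    rw [if_pos rfl]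
    push_cast
    ring

lemma exists_walk {h : ℕ} (hh : 1 ≤ h) (u v : LadderNode h 1) :
    ∃ l : List (LadderNode h 1), l.head? = some u ∧ l.getLast? = some v ∧
      walkCostE (ladderEdges h 1) l = (dN h u v : ENNReal) := by
  by_cases huv : u = v
  · subst huv
    exact ⟨[u], rfl, rfl, by simp [walkCostE, dN_self]⟩
  rcases u with ⟨⟨⟩⟩ | ⟨j, i, b⟩
  · rcases v with ⟨⟨⟩⟩ | ⟨j', i', b'⟩
    · exact absurd rfl huv
    · obtain ⟨l, h1, h2, h3⟩ := walk_from_root hh (i' : ℕ) i'.isLt b'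
      refine ⟨l, h1, ?_, ?_⟩
      · rw [h2]
        congr 1
        rw [ladNode, dif_pos i'.isLt]
        congr 1
        exact Prod.ext (Subsingleton.elim _ _) (Prod.ext (Fin.eta i' i'.isLt ▸ rfl) rfl)
      · rw [h3]
        congr 1
        simp [dN, crossN, row, Nat.dist]
  · rcases v with ⟨⟨⟩⟩ | ⟨j', i', b'⟩
    · obtain ⟨l, h1, h2, h3⟩ := walk_from_root hh (i : ℕ) i.isLt b
      refine ⟨l.reverse, ?_, ?_, ?_⟩
      · rw [List.head?_reverse, h2]
        congr 1
        rw [ladNode, dif_pos i.isLt]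
        congr 1
        exact Prod.ext (Subsingleton.elim _ _) (Prod.ext (Fin.eta i i.isLt ▸ rfl) rfl)
      · rw [List.getLast?_reverse, h1]
      · rw [walkCostE_reverse, h3]
        congr 1
        simp [dN, crossN, row, Nat.dist]
    · by_cases hb : b = b'
      · subst hb
        obtain ⟨l, h1, h2, h3⟩ := walk_same_side hh (i : ℕ) (i' : ℕ) i.isLt i'.isLt b
        have e1 : ladNode h (i : ℕ) b = Sum.inr (j, i, b) := by
          rw [ladNode, dif_pos i.isLt]
          congr 1
          exact Prod.ext (Subsingleton.elim _ _) (Prod.ext (Fin.eta i i.isLt ▸ rfl) rfl)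
        have e2 : ladNode h (i' : ℕ) b = Sum.inr (j', i', b) := by
          rw [ladNode, dif_pos i'.isLt]
          congr 1
          exact Prod.ext (Subsingleton.elim _ _) (Prod.ext (Fin.eta i' i'.isLt ▸ rfl) rfl)
        refine ⟨l, by rw [h1, e1], by rw [h2, e2], ?_⟩
        rw [h3]
        have hD : Nat.dist ((i:ℕ)+1) ((i':ℕ)+1) = Nat.dist (i:ℕ) (i':ℕ) := by
          simp [Nat.dist]
        have : dN h (Sum.inr (j, i, b)) (Sum.inr (j', i', b)) = Nat.dist (i:ℕ) (i':ℕ) * h := by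
          show Nat.dist ((i:ℕ)+1) ((i':ℕ)+1) * h + crossN (Sum.inr (j, i, b) : LadderNode h 1) (Sum.inr (j', i', b)) = _
          rw [hD, show crossN (Sum.inr (j, i, b) : LadderNode h 1) (Sum.inr (j', i', b)) = 0 from if_pos rfl]
          omega
        rw [this]
        push_cast
        ring
      · obtain ⟨l, h1, h2, h3⟩ := walk_same_side hh (i : ℕ) (i' : ℕ) i.isLt i'.isLt b
        have e1 : ladNode h (i : ℕ) b = Sum.inr (j, i, b) := by
          rw [ladNode, dif_pos i.isLt]
          congr 1
          exact Prod.ext (Subsingleton.elim _ _) (Prod.ext (Fin.eta i i.isLt ▸ rfl) rfl)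
        refine ⟨l ++ [Sum.inr (j', i', b')], ?_, ?_, ?_⟩
        · rcases l with _ | ⟨a, t⟩
          · simp at h1
          · simp only [List.cons_append, List.head?_cons, Option.some.injEq] at h1 ⊢
            rw [h1, e1]
        · rw [List.getLast?_append_of_ne_nil] <;> simp
        · rw [walkCostE_append _ l [Sum.inr (j', i', b')] _ _ h2 rfl, h3]
          have e2 : ladNode h (i' : ℕ) b = Sum.inr (j', i', b) := by
            rw [ladNode, dif_pos i'.isLt]
            congr 1
            exact Prod.ext (Subsingleton.elim _ _) (Prod.ext (Fin.eta i' i'.isLt ▸ rfl) rfl)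
          have hedge : ladderEdges h 1 (ladNode h (i':ℕ) b) (Sum.inr (j', i', b')) = 1 := by
            rw [e2]
            simp only [ladderEdges]
            rw [if_neg, if_pos]
            · exact ⟨trivial, trivial, hb⟩
            · rintro ⟨-, hbb, -⟩
              exact hb hbb
          rw [hedge]
          have hD : Nat.dist ((i:ℕ)+1) ((i':ℕ)+1) = Nat.dist (i:ℕ) (i':ℕ) := by
            simp [Nat.dist]
          have : dN h (Sum.inr (j, i, b)) (Sum.inr (j', i', b')) = Nat.dist (i:ℕ) (i':ℕ) * h + 1 := by
            show Nat.dist ((i:ℕ)+1) ((i':ℕ)+1) * h + crossN (Sum.inr (j, i, b) : LadderNode h 1) (Sum.inr (j', i', b')) = _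
            rw [hD, show crossN (Sum.inr (j, i, b) : LadderNode h 1) (Sum.inr (j', i', b')) = 1 from if_neg hb]
          rw [this]
          push_cast
          simp [walkCostE]

lemma ladderMetric_eq {h : ℕ} (hh : 1 ≤ h) (u v : LadderNode h 1) :
    ladderMetric h 1 u v = (dN h u v : ℝ) := by
  unfold ladderMetric spDist
  have hinf : (⨅ l ∈ {l : List (LadderNode h 1) | l.head? = some u ∧ l.getLast? = some v},
      walkCostE (ladderEdges h 1) l) = (dN h u v : ENNReal) := by
    apply le_antisymm
    · obtain ⟨l, h1, h2, h3⟩ := exists_walk hh u v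
      exact (iInf₂_le l ⟨h1, h2⟩).trans_eq h3
    · exact le_iInf₂ fun l hl => walk_lb hh l u v hl.1 hl.2
  rw [hinf]
  simp

end Ladder
namespace Ladder

lemma pathCost_eq_sum {α : Type*} (c : α → α → ℝ) (r : α) :
    ∀ l : List α, pathCost c l =
      ∑ k ∈ Finset.range (l.length - 1), c (l.getD k r) (l.getD (k+1) r) := by
  intro l
  induction l with
  | nil => simp [pathCost]
  | cons a t ih =>
    match t, ih with
    | [], _ => simp [pathCost]
    | b :: t', ih =>
      show c a b + pathCost c (b :: t') = _
      rw [ih]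
      have hlen : (a :: b :: t').length - 1 = ((b :: t').length - 1) + 1 := by
        simp
      rw [hlen, Finset.sum_range_succ']
      simp [List.getD_cons_succ, List.getD_cons_zero]
      ring

lemma bool_change (f : ℕ → Bool) :
    ∀ b a, a ≤ b → f a ≠ f b → ∃ k, a ≤ k ∧ k < b ∧ f k ≠ f (k+1) := by
  intro b
  induction b with
  | zero => intro a ha hne; interval_cases a; exact absurd rfl hne
  | succ b ih =>
    intro a ha hne
    rcases Nat.lt_or_ge a (b+1) with h1 | h1
    · by_cases hfb : f b = f (b+1)
      · obtain ⟨k, hk1, hk2, hk3⟩ := ih a (by omega) (by rw [hfb]; exact hne)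
        exact ⟨k, hk1, by omega, hk3⟩
      · exact ⟨b, by omega, by omega, hfb⟩
    · have : a = b+1 := by omega
      subst this
      exact absurd rfl hne

lemma dN_root {h : ℕ} (x : LadderNode h 1) : dN h (Sum.inl ()) x = row x * h := by
  rcases x with ⟨⟨⟩⟩ | ⟨j, i, b⟩ <;> simp [dN, crossN, row, Nat.dist]

lemma crossN_eq_one {h c : ℕ} {x y : LadderNode h c} (hx : 1 ≤ row x) (hy : 1 ≤ row y)
    (hs : side x ≠ side y) : crossN x y = 1 := by
  rcases x with ⟨⟨⟩⟩ | ⟨j, i, b⟩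
  · simp [row] at hx
  rcases y with ⟨⟨⟩⟩ | ⟨j', i', b'⟩
  · simp [row] at hy
  simp only [side] at hs
  simp [crossN, hs]

lemma excess_ge_cross {h : ℕ} (hh : 1 ≤ h) (x y : LadderNode h 1) :
    (crossN x y : ℝ) ≤ (dN h x y : ℝ) - ((row y : ℝ) - (row x : ℝ)) * h := by
  have hd : (row y : ℝ) ≤ (Nat.dist (row x) (row y) : ℝ) + (row x : ℝ) := by
    have : row y ≤ Nat.dist (row x) (row y) + row x := by simp [Nat.dist]; omega
    exact_mod_cast this
  have hcast : (dN h x y : ℝ) = (Nat.dist (row x) (row y) : ℝ) * h + (crossN x y : ℝ) := by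
    rw [dN]; push_cast; ring
  rw [hcast]
  have hge : (0:ℝ) ≤ ((Nat.dist (row x) (row y) : ℝ) - ((row y : ℝ) - (row x : ℝ))) * h :=
    mul_nonneg (by linarith) (by positivity)
  nlinarith

lemma excess_ge_two_h {h : ℕ} (hh : 1 ≤ h) (x y : LadderNode h 1) (hd : row y < row x) :
    2 * (h:ℝ) ≤ (dN h x y : ℝ) - ((row y : ℝ) - (row x : ℝ)) * h := by
  have hdd : (2 : ℝ) + (row y : ℝ) ≤ (Nat.dist (row x) (row y) : ℝ) + (row x : ℝ) := by
    have : 2 + row y ≤ Nat.dist (row x) (row y) + row x := by simp [Nat.dist]; omega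
    exact_mod_cast this
  have hcast : (dN h x y : ℝ) = (Nat.dist (row x) (row y) : ℝ) * h + (crossN x y : ℝ) := by
    rw [dN]; push_cast; ring
  rw [hcast]
  have hcr : (0:ℝ) ≤ (crossN x y : ℝ) := by positivity
  have hhr : (0:ℝ) ≤ (h:ℝ) := by positivity
  nlinarith

end Ladder
namespace Ladder

lemma ladNode_eq_inr {h : ℕ} {t : ℕ} (ht : t < 2*h-1) (b : Bool) :
    ladNode h t b = Sum.inr (0, ⟨t, ht⟩, b) := dif_pos ht

lemma part_a {h : ℕ} (hh : 1 ≤ h) (w : List (LadderNode h 1))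
    (hrp : IsRootedPath (Sum.inl () : LadderNode h 1) w)
    (hcov : ∀ v : LadderNode h 1, v ≠ Sum.inl () → v ∈ w.tail) :
    2 * (h : ℝ) - 1 ≤ pathRegret (ladderMetric h 1) (Sum.inl ()) w := by
  obtain ⟨hhead, hnodup⟩ := hrp
  have hwne : w ≠ [] := by intro hw; rw [hw] at hhead; simp at hhead
  set rt : LadderNode h 1 := Sum.inl () with hrt
  set W : ℕ → LadderNode h 1 := fun k => w.getD k rt with hWdef
  set n : ℕ := w.length - 1 with hn
  have hlen : w.length = n + 1 := by
    have := List.length_pos_iff.2 hwne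
    omega
  have hW0 : W 0 = rt := by
    rcases w with _ | ⟨a, t⟩
    · exact absurd rfl hwne
    · simp at hhead
      simp [hWdef, hhead]
  have hWlast : w.getLastD rt = W n := by
    show _ = w.getD n rt
    rw [List.getLastD_eq_getLast?, List.getLast?_eq_getElem?, List.getD_eq_getElem?_getD, hlen]
    simp
  -- regret equals sum of excesses
  have hsum : pathRegret (ladderMetric h 1) rt w
      = ∑ k ∈ Finset.range n,
          ((dN h (W k) (W (k+1)) : ℝ) - ((row (W (k+1)) : ℝ) - (row (W k) : ℝ)) * h) := by
    have hmetric : ∀ x y, ladderMetric h 1 x y = (dN h x y : ℝ) := ladderMetric_eq hh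
    have hterm : ∑ k ∈ Finset.range n,
        (((row (W (k+1)) : ℝ) * h) - ((row (W k) : ℝ) * h))
        = (row (W n) : ℝ) * h - (row (W 0) : ℝ) * h :=
      Finset.sum_range_sub (fun k => (row (W k) : ℝ) * h) n
    have hcost : pathCost (ladderMetric h 1) w
        = ∑ k ∈ Finset.range n, (dN h (W k) (W (k+1)) : ℝ) := by
      rw [pathCost_eq_sum (ladderMetric h 1) rt w]
      rw [show w.length - 1 = n from rfl]
      exact Finset.sum_congr rfl fun k _ => hmetric _ _
    rw [pathRegret, hWlast, hcost, hmetric, dN_root]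
    rw [hW0] at hterm
    have hr0 : row rt = 0 := rfl
    rw [hr0] at hterm
    push_cast at hterm ⊢
    rw [Finset.sum_sub_distrib]
    rw [show ∑ k ∈ Finset.range n, (((row (W (k+1)) : ℝ) - (row (W k) : ℝ)) * h)
      = ∑ k ∈ Finset.range n, (((row (W (k+1)) : ℝ) * h) - ((row (W k) : ℝ) * h)) from
      Finset.sum_congr rfl fun k _ => by ring]
    rw [hterm]
    ring
  rw [hsum]
  have hnonneg : ∀ k ∈ Finset.range n,
      (0:ℝ) ≤ (dN h (W k) (W (k+1)) : ℝ) - ((row (W (k+1)) : ℝ) - (row (W k) : ℝ)) * h := by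
    intro k _
    have := excess_ge_cross hh (W k) (W (k+1))
    have : (0:ℝ) ≤ (crossN (W k) (W (k+1)) : ℝ) := by positivity
    linarith [excess_ge_cross hh (W k) (W (k+1))]
  by_cases hdesc : ∃ k, k < n ∧ row (W (k+1)) < row (W k)
  · obtain ⟨k0, hk0, hk0d⟩ := hdesc
    have h1 := excess_ge_two_h hh (W k0) (W (k0+1)) hk0d
    have h2 := Finset.single_le_sum hnonneg (Finset.mem_range.2 hk0)
    linarith
  · push_neg at hdesc
    have hmono : ∀ p q, p ≤ q → q ≤ n → row (W p) ≤ row (W q) := by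
      intro p q hpq hqn
      induction q, hpq using Nat.le_induction with
      | base => exact le_rfl
      | succ q hq ih => exact le_trans (ih (by omega)) (hdesc q (by omega))
    -- index of each node
    have hidx : ∀ v : LadderNode h 1, v ≠ rt → ∃ p, 1 ≤ p ∧ p ≤ n ∧ W p = v := by
      intro v hv
      have hmem : v ∈ w := List.mem_of_mem_tail (hcov v hv)
      obtain ⟨p, hp, hpv⟩ := List.getElem_of_mem hmem
      refine ⟨p, ?_, by omega, ?_⟩
      · rcases Nat.eq_zero_or_pos p with h0 | h0
        · subst h0
          have : W 0 = v := by
            show w.getD 0 rt = v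
            rw [List.getD_eq_getElem _ _ hp]; exact hpv
          rw [hW0] at this
          exact absurd this.symm hv
        · exact h0
      · show w.getD p rt = v
        rw [List.getD_eq_getElem _ _ hp]; exact hpv
    -- the crossing set
    classical
    set C : Finset ℕ := (Finset.range n).filter
      (fun k => 1 ≤ row (W k) ∧ 1 ≤ row (W (k+1)) ∧ side (W k) ≠ side (W (k+1))) with hC
    have hclaim : ∀ s, s ∈ Finset.Icc 1 (2*h-1) → ∃ k, k ∈ C ∧ row (W k) = s := by
      intro s hs
      rw [Finset.mem_Icc] at hs
      have hs1 : s - 1 < 2*h - 1 := by omega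
      have hu : W ((hidx (Sum.inr (0, ⟨s-1, hs1⟩, true)) (by simp)).choose)
          = Sum.inr (0, ⟨s-1, hs1⟩, true) := (hidx _ (by simp)).choose_spec.2.2
      -- symmetric helper
      have main : ∀ p q : ℕ, p < q → q ≤ n → row (W p) = s → row (W q) = s →
          side (W p) ≠ side (W q) → ∃ k, k ∈ C ∧ row (W k) = s := by
        intro p q hpq hqn hrp hrq hside
        obtain ⟨k, hk1, hk2, hk3⟩ := bool_change (fun k => side (W k)) q p (by omega) hside
        have hrow1 : row (W k) = s := le_antisymm (hrq ▸ hmono k q (by omega) hqn)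
          (hrp ▸ hmono p k hk1 (by omega))
        have hrow2 : row (W (k+1)) = s := le_antisymm (hrq ▸ hmono (k+1) q (by omega) hqn)
          (hrp ▸ hmono p (k+1) (by omega) (by omega))
        refine ⟨k, ?_, hrow1⟩
        rw [hC, Finset.mem_filter, Finset.mem_range]
        exact ⟨by omega, by omega, by omega, hk3⟩
      obtain ⟨p, hp1, hpn, hpW⟩ := hidx (Sum.inr (0, ⟨s-1, hs1⟩, true)) (by simp)
      obtain ⟨q, hq1, hqn, hqW⟩ := hidx (Sum.inr (0, ⟨s-1, hs1⟩, false)) (by simp)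
      have hrowp : row (W p) = s := by rw [hpW]; simp [row]; omega
      have hrowq : row (W q) = s := by rw [hqW]; simp [row]; omega
      have hsides : side (W p) ≠ side (W q) := by rw [hpW, hqW]; simp [side]
      have hpq : p ≠ q := by
        intro he; rw [he, hqW] at hpW; simp at hpW
      rcases Nat.lt_or_ge p q with hlt | hge
      · exact main p q hlt hqn hrowp hrowq hsides
      · exact main q p (by omega) hpn hrowq hrowp (Ne.symm hsides)
    have hclaim' : ∀ s : ℕ, ∃ k, s ∈ Finset.Icc 1 (2*h-1) → (k ∈ C ∧ row (W k) = s) := by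
      intro s
      by_cases hs : s ∈ Finset.Icc 1 (2*h-1)
      · obtain ⟨k, hk⟩ := hclaim s hs
        exact ⟨k, fun _ => hk⟩
      · exact ⟨0, fun hs' => absurd hs' hs⟩
    choose f hf using hclaim'
    have hcard : 2*h - 1 ≤ C.card := by
      have := Finset.card_le_card_of_injOn f (fun s hs => (hf s hs).1)
        (fun s1 h1 s2 h2 he => by
          rw [← (hf s1 (Finset.mem_coe.1 h1)).2, ← (hf s2 (Finset.mem_coe.1 h2)).2, he])
      rwa [Nat.card_Icc, show 2*h-1+1-1 = 2*h-1 from rfl] at this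
    -- sum bound
    have hterm : ∀ k ∈ Finset.range n,
        (if 1 ≤ row (W k) ∧ 1 ≤ row (W (k+1)) ∧ side (W k) ≠ side (W (k+1)) then (1:ℝ) else 0)
          ≤ (dN h (W k) (W (k+1)) : ℝ) - ((row (W (k+1)) : ℝ) - (row (W k) : ℝ)) * h := by
      intro k hk
      split
      · next hcr =>
        have : crossN (W k) (W (k+1)) = 1 := crossN_eq_one hcr.1 hcr.2.1 hcr.2.2
        have h2 := excess_ge_cross hh (W k) (W (k+1))
        rw [this] at h2
        exact_mod_cast h2
      · exact hnonneg k hk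
    have hsum2 := Finset.sum_le_sum hterm
    rw [Finset.sum_boole] at hsum2
    have hCcard : (C.card : ℝ) = ((Finset.range n).filter
        (fun k => 1 ≤ row (W k) ∧ 1 ≤ row (W (k+1)) ∧ side (W k) ≠ side (W (k+1)))).card := by
      rw [hC]
    have hfinal : (2 * (h:ℝ) - 1) ≤ (C.card : ℝ) := by
      have : ((2*h-1 : ℕ) : ℝ) ≤ (C.card : ℝ) := by exact_mod_cast hcard
      have hcast : ((2*h-1 : ℕ) : ℝ) = 2*(h:ℝ) - 1 := by
        have : (1:ℕ) ≤ 2*h := by omega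
        push_cast [Nat.cast_sub this]
        ring
      linarith [hcast ▸ this]
    calc 2*(h:ℝ) - 1 ≤ (C.card : ℝ) := hfinal
      _ ≤ _ := by rw [hCcard]; exact hsum2

end Ladder
namespace Ladder

lemma pathCost_append {α : Type*} (c : α → α → ℝ) :
    ∀ (l1 l2 : List α) (x y : α), l1.getLast? = some x → l2.head? = some y →
      pathCost c (l1 ++ l2) = pathCost c l1 + c x y + pathCost c l2 := by
  intro l1
  induction l1 with
  | nil => intro l2 x y h1 h2; simp at h1
  | cons a t ih =>
    intro l2 x y h1 h2
    match t with
    | [] =>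
      simp at h1
      subst h1
      match l2, h2 with
      | b :: t2, h2 =>
        simp at h2
        subst h2
        simp [pathCost]
    | b :: t' =>
      rw [List.getLast?_cons_cons] at h1
      have := ih l2 x y h1 h2
      show c a b + pathCost c ((b :: t') ++ l2) = (c a b + pathCost c (b :: t')) + c x y + pathCost c l2
      rw [this]; ring

lemma pathCost_cons {α : Type*} (c : α → α → ℝ) (a : α) (L : List α) (x : α)
    (hx : L.head? = some x) : pathCost c (a :: L) = c a x + pathCost c L := by
  have := pathCost_append c [a] L a x rfl hx
  simpa [pathCost] using this

lemma dN_vert {h : ℕ} {t t' : ℕ} (ht : t < 2*h-1) (ht' : t' < 2*h-1) (b : Bool) :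
    dN h (ladNode h t b) (ladNode h t' b) = Nat.dist t t' * h := by
  rw [ladNode_eq_inr ht, ladNode_eq_inr ht']
  show Nat.dist (t+1) (t'+1) * h + (if b = b then 0 else 1) = _
  rw [if_pos rfl, show Nat.dist (t+1) (t'+1) = Nat.dist t t' by simp [Nat.dist]]
  omega

lemma dN_rung {h : ℕ} {t : ℕ} (ht : t < 2*h-1) {b b' : Bool} (hb : b ≠ b') :
    dN h (ladNode h t b) (ladNode h t b') = 1 := by
  rw [ladNode_eq_inr ht, ladNode_eq_inr ht]
  show Nat.dist (t+1) (t+1) * h + (if b = b' then 0 else 1) = _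
  rw [if_neg hb, Nat.dist_self]
  omega

lemma row_ladNode {h : ℕ} {t : ℕ} (ht : t < 2*h-1) (b : Bool) :
    row (ladNode h t b) = t + 1 := by
  rw [ladNode_eq_inr ht]; rfl

lemma pathChain_cost {h : ℕ} (hh : 1 ≤ h) (b : Bool) :
    ∀ (k a : ℕ), a + k + 1 ≤ 2*h - 1 →
      pathCost (ladderMetric h 1) ((List.range' a (k+1)).map (fun t => ladNode h t b))
        = (k * h : ℕ) := by
  intro k
  induction k with
  | zero => intro a ha; simp [pathCost]
  | succ k ih =>
    intro a ha
    have hr1 : List.range' a (k+1+1) = a :: List.range' (a+1) (k+1) := List.range'_succ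
    have hr2 : List.range' (a+1) (k+1) = (a+1) :: List.range' (a+2) k := List.range'_succ
    have hcost : ladderMetric h 1 (ladNode h a b) (ladNode h (a+1) b) = ((h : ℕ) : ℝ) := by
      rw [ladderMetric_eq hh, dN_vert (by omega) (by omega)]
      congr 1
      have : Nat.dist a (a+1) = 1 := by simp [Nat.dist]
      rw [this]; omega
    have ihv := ih (a+1) (by omega)
    rw [hr2, List.map_cons] at ihv
    rw [hr1, hr2, List.map_cons, List.map_cons]
    show ladderMetric h 1 (ladNode h a b) (ladNode h (a+1) b) + _ = _
    rw [hcost, ihv]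
    push_cast
    ring

/-- the generic `P_i`-style path -/
lemma genPath_props {h : ℕ} (hh : 1 ≤ h) (i : ℕ) (hi1 : 1 ≤ i) (hi2 : i ≤ 2*h-1)
    {b b' : Bool} (hb : b ≠ b') :
    (Sum.inl () :: (((List.range i).map fun t => ladNode h t b)
        ++ ((List.range' (i - 1) (2 * h - i)).map fun t => ladNode h t b'))).Nodup ∧
    pathRegret (ladderMetric h 1) (Sum.inl ())
      (Sum.inl () :: (((List.range i).map fun t => ladNode h t b)
        ++ ((List.range' (i - 1) (2 * h - i)).map fun t => ladNode h t b'))) = 1 := by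
  set A : List (LadderNode h 1) := (List.range i).map fun t => ladNode h t b with hA
  set B : List (LadderNode h 1) := (List.range' (i - 1) (2 * h - i)).map fun t => ladNode h t b' with hB
  have hero : List.range i = List.range' 0 i := List.range_eq_range'
  have hi' : i = (i-1)+1 := by omega
  have hBr : 2*h - i = (2*h-i-1)+1 := by omega
  have hAhead : A.head? = some (ladNode h 0 b) := by
    rw [hA, hero, hi']; exact chain_head b (i-1) 0
  have hAlast : A.getLast? = some (ladNode h (i-1) b) := by
    rw [hA, hero, hi']
    have := chain_last (h := h) b (i-1) 0
    rwa [Nat.zero_add] at this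
  have hBhead : B.head? = some (ladNode h (i-1) b') := by
    rw [hB, hBr]; exact chain_head b' (2*h-i-1) (i-1)
  have hBlast : B.getLast? = some (ladNode h (2*h-2) b') := by
    rw [hB, hBr]
    have := chain_last (h := h) b' (2*h-i-1) (i-1)
    rwa [show (i-1) + (2*h-i-1) = 2*h-2 by omega] at this
  have hBne : B ≠ [] := by
    intro hc
    rw [hc] at hBhead
    simp at hBhead
  have hAne : A ≠ [] := by
    intro hc
    rw [hc] at hAhead
    simp at hAhead
  constructor
  · -- Nodup
    rw [List.nodup_cons]
    constructor
    · -- root not in A ++ B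
      rw [List.mem_append]
      rintro (hmem | hmem)
      · rw [hA] at hmem
        obtain ⟨t, ht, heq⟩ := List.mem_map.1 hmem
        rw [List.mem_range] at ht
        rw [ladNode_eq_inr (by omega)] at heq
        simp at heq
      · rw [hB] at hmem
        obtain ⟨t, ht, heq⟩ := List.mem_map.1 hmem
        rw [List.mem_range'_1] at ht
        rw [ladNode_eq_inr (by omega)] at heq
        simp at heq
    · -- A ++ B nodup
      rw [List.nodup_append]
      refine ⟨?_, ?_, ?_⟩
      · rw [hA]
        refine List.Nodup.map_on ?_ List.nodup_range
        intro x hx y hy hxy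
        rw [List.mem_range] at hx hy
        rw [ladNode_eq_inr (by omega), ladNode_eq_inr (by omega)] at hxy
        simpa using hxy
      · rw [hB]
        refine List.Nodup.map_on ?_ List.nodup_range'
        intro x hx y hy hxy
        rw [List.mem_range'_1] at hx hy
        rw [ladNode_eq_inr (by omega), ladNode_eq_inr (by omega)] at hxy
        simpa using hxy
      · intro x hx y hy hxy
        rw [hA] at hx
        rw [hB] at hy
        obtain ⟨t, ht, heq⟩ := List.mem_map.1 hx
        obtain ⟨t', ht', heq'⟩ := List.mem_map.1 hy
        rw [List.mem_range] at ht
        rw [List.mem_range'_1] at ht'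
        rw [ladNode_eq_inr (by omega)] at heq
        rw [ladNode_eq_inr (by omega)] at heq'
        rw [← heq', ← heq] at hxy
        simp at hxy
        exact hb hxy.2
  · -- regret
    have hlast : (Sum.inl () :: (A ++ B)).getLastD (Sum.inl ()) = ladNode h (2*h-2) b' := by
      rw [List.getLastD_eq_getLast?, getLast?_cons_of_ne_nil _ (by simp [hBne]),
        List.getLast?_append_of_ne_nil A hBne, hBlast]
      rfl
    have hcost : pathCost (ladderMetric h 1) (Sum.inl () :: (A ++ B))
        = (h : ℝ) + ((i-1) * h : ℕ) + 1 + ((2*h-i-1) * h : ℕ) := by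
      have hheadAB : (A ++ B).head? = some (ladNode h 0 b) := by
        rcases A with _ | ⟨a0, A'⟩
        · exact absurd rfl hAne
        · simp at hAhead ⊢
          exact hAhead
      rw [pathCost_cons _ _ _ _ hheadAB,
        pathCost_append _ A B _ _ hAlast hBhead]
      have h1 : ladderMetric h 1 (Sum.inl ()) (ladNode h 0 b) = ((h:ℕ) : ℝ) := by
        rw [ladderMetric_eq hh, dN_root, row_ladNode (by omega)]
        norm_num
      have h2 : ladderMetric h 1 (ladNode h (i-1) b) (ladNode h (i-1) b') = 1 := by
        rw [ladderMetric_eq hh, dN_rung (by omega) hb]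
        norm_num
      have h3 : pathCost (ladderMetric h 1) A = ((i-1) * h : ℕ) := by
        rw [hA, hero, hi']
        exact pathChain_cost hh b (i-1) 0 (by omega)
      have h4 : pathCost (ladderMetric h 1) B = ((2*h-i-1) * h : ℕ) := by
        rw [hB, hBr]
        exact pathChain_cost hh b' (2*h-i-1) (i-1) (by omega)
      rw [h1, h2, h3, h4]
      push_cast
      ring
    rw [pathRegret, hlast, hcost, ladderMetric_eq hh, dN_root, row_ladNode (by omega)]
    rw [show (2*h-2+1)*h = h + (i-1)*h + (2*h-i-1)*h by
      have h1 : 2*h-2+1 = 1 + (i-1) + (2*h-i-1) := by omega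
      rw [h1, Nat.add_mul, Nat.add_mul, Nat.one_mul]]
    push_cast
    ring

end Ladder
namespace Ladder

lemma mem_chain_iff {h : ℕ} (L : List ℕ) (hL : ∀ t ∈ L, t < 2*h-1) (b' : Bool)
    {t : ℕ} (ht : t < 2*h-1) (b : Bool) :
    (Sum.inr (0, ⟨t, ht⟩, b) : LadderNode h 1) ∈ L.map (fun s => ladNode h s b')
      ↔ (t ∈ L ∧ b = b') := by
  constructor
  · rintro hmem
    obtain ⟨a, haL, heq⟩ := List.mem_map.1 hmem
    rw [ladNode_eq_inr (hL a haL)] at heq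
    simp at heq
    obtain ⟨h1, h2⟩ := heq
    exact ⟨h1 ▸ haL, h2.symm⟩
  · rintro ⟨h1, h2⟩
    refine List.mem_map.2 ⟨t, h1, ?_⟩
    rw [ladNode_eq_inr ht, h2]

lemma mem_ladderPath_tail {h : ℕ} (hh : 1 ≤ h) (i : ℕ) (hi1 : 1 ≤ i) (hi2 : i ≤ 2*h-1)
    {t : ℕ} (ht : t < 2*h-1) (b : Bool) :
    ((Sum.inr (0, ⟨t, ht⟩, b) : LadderNode h 1) ∈ (ladderPath h i).tail)
      ↔ (if i % 2 = 1 then (b = true ∧ t < i) ∨ (b = false ∧ i-1 ≤ t)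
          else (b = false ∧ t < i) ∨ (b = true ∧ i-1 ≤ t)) := by
  have hr : ∀ s ∈ List.range i, s < 2*h-1 := by
    intro s hs; rw [List.mem_range] at hs; omega
  have hr' : ∀ s ∈ List.range' (i-1) (2*h-i), s < 2*h-1 := by
    intro s hs; rw [List.mem_range'_1] at hs; omega
  rw [ladderPath]
  by_cases hpar : i % 2 = 1
  · rw [if_pos hpar, if_pos hpar]
    show _ ∈ _ ++ _ ↔ _
    rw [List.mem_append, mem_chain_iff _ hr _ ht, mem_chain_iff _ hr' _ ht,
      List.mem_range, List.mem_range'_1]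
    constructor
    · rintro (⟨h1, h2⟩ | ⟨h1, h2⟩)
      · exact Or.inl ⟨h2, h1⟩
      · exact Or.inr ⟨h2, by omega⟩
    · rintro (⟨h1, h2⟩ | ⟨h1, h2⟩)
      · exact Or.inl ⟨h2, h1⟩
      · exact Or.inr ⟨by omega, h1⟩
  · rw [if_neg hpar, if_neg hpar]
    show _ ∈ _ ++ _ ↔ _
    rw [List.mem_append, mem_chain_iff _ hr _ ht, mem_chain_iff _ hr' _ ht,
      List.mem_range, List.mem_range'_1]
    constructor
    · rintro (⟨h1, h2⟩ | ⟨h1, h2⟩)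
      · exact Or.inl ⟨h2, h1⟩
      · exact Or.inr ⟨h2, by omega⟩
    · rintro (⟨h1, h2⟩ | ⟨h1, h2⟩)
      · exact Or.inl ⟨h2, h1⟩
      · exact Or.inr ⟨by omega, h1⟩

lemma count_true (h t : ℕ) (hh : 1 ≤ h) (ht : t < 2*h-1) :
    ((Finset.Icc 1 (2*h-1)).filter
      (fun i => (i % 2 = 1 ∧ t < i) ∨ (¬ (i % 2 = 1) ∧ i - 1 ≤ t))).card = h := by
  rw [Finset.card_nbij' (fun i => (i-1)/2)
      (fun j => if t + 1 ≤ 2*j+1 then 2*j+1 else 2*j+2)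
      (s := (Finset.Icc 1 (2*h-1)).filter
        (fun i => (i % 2 = 1 ∧ t < i) ∨ (¬ (i % 2 = 1) ∧ i - 1 ≤ t)))
      (t := Finset.range h) ?_ ?_ ?_ ?_]
  · exact Finset.card_range h
  · intro i hi
    simp only [Finset.mem_coe, Finset.mem_filter, Finset.mem_Icc] at hi
    simp only [Finset.mem_coe, Finset.mem_range]
    omega
  · intro j hj
    simp only [Finset.mem_coe, Finset.mem_range] at hj
    simp only [Finset.mem_coe, Finset.mem_filter, Finset.mem_Icc]
    split <;> omega
  · intro i hi
    simp only [Finset.mem_coe, Finset.mem_filter, Finset.mem_Icc] at hi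
    dsimp only
    split <;> omega
  · intro j hj
    simp only [Finset.mem_coe, Finset.mem_range] at hj
    dsimp only
    split <;> omega

lemma count_false (h t : ℕ) (hh : 1 ≤ h) (ht : t < 2*h-1) :
    ((Finset.Icc 1 (2*h-1)).filter
      (fun i => (i % 2 = 1 ∧ i - 1 ≤ t) ∨ (¬ (i % 2 = 1) ∧ t < i))).card = h := by
  rw [Finset.card_nbij' (fun i => i/2)
      (fun j => if 2*j+1 ≤ t + 1 then 2*j+1 else 2*j)
      (s := (Finset.Icc 1 (2*h-1)).filter
        (fun i => (i % 2 = 1 ∧ i - 1 ≤ t) ∨ (¬ (i % 2 = 1) ∧ t < i)))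
      (t := Finset.range h) ?_ ?_ ?_ ?_]
  · exact Finset.card_range h
  · intro i hi
    simp only [Finset.mem_coe, Finset.mem_filter, Finset.mem_Icc] at hi
    simp only [Finset.mem_coe, Finset.mem_range]
    omega
  · intro j hj
    simp only [Finset.mem_coe, Finset.mem_range] at hj
    simp only [Finset.mem_coe, Finset.mem_filter, Finset.mem_Icc]
    split <;> omega
  · intro i hi
    simp only [Finset.mem_coe, Finset.mem_filter, Finset.mem_Icc] at hi
    dsimp only
    split <;> omega
  · intro j hj
    simp only [Finset.mem_coe, Finset.mem_range] at hj
    dsimp only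
    split <;> omega

end Ladder

/-- in the shortest-path metric of a single ladder `L_h` rooted at `r`:
(a) every rooted path covering all non-root nodes has regret at least `2h−1`;
(b) for `1 ≤ i ≤ 2h−1`, the rooted path `P_i` has regret exactly `1`; and
every non-root node lies on exactly `h` of the paths `P_1, …, P_{2h−1}`. -/
theorem single_ladder_properties (h : ℕ) (hh : 1 ≤ h) :
    (∀ w : List (LadderNode h 1), IsRootedPath (Sum.inl () : LadderNode h 1) w →
      (∀ v : LadderNode h 1, v ≠ Sum.inl () → v ∈ w.tail) →
      2 * (h : ℝ) - 1 ≤ pathRegret (ladderMetric h 1) (Sum.inl ()) w) ∧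
    (∀ i, 1 ≤ i → i ≤ 2 * h - 1 →
      IsRootedPath (Sum.inl () : LadderNode h 1) (ladderPath h i) ∧
      pathRegret (ladderMetric h 1) (Sum.inl ()) (ladderPath h i) = 1) ∧
    (∀ v : LadderNode h 1, v ≠ Sum.inl () →
      ((Finset.Icc 1 (2 * h - 1)).filter
        (fun i => v ∈ (ladderPath h i).tail)).card = h) := by
  refine ⟨fun w hrp hcov => Ladder.part_a hh w hrp hcov, ?_, ?_⟩
  · intro i hi1 hi2
    by_cases hpar : i % 2 = 1
    · have hprops := Ladder.genPath_props hh i hi1 hi2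
        (b := true) (b' := false) (by simp)
      refine ⟨⟨rfl, ?_⟩, ?_⟩
      · rw [ladderPath, if_pos hpar]
        exact hprops.1
      · rw [ladderPath, if_pos hpar]
        exact hprops.2
    · have hprops := Ladder.genPath_props hh i hi1 hi2
        (b := false) (b' := true) (by simp)
      refine ⟨⟨rfl, ?_⟩, ?_⟩
      · rw [ladderPath, if_neg hpar]
        exact hprops.1
      · rw [ladderPath, if_neg hpar]
        exact hprops.2
  · intro v hv
    rcases v with ⟨⟨⟩⟩ | ⟨j, iF, b⟩
    · exact absurd rfl hv
    obtain rfl : j = 0 := Subsingleton.elim j 0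
    obtain ⟨t, ht⟩ := iF
    rcases b with _ | _
    · -- b = false
      have hfe : (Finset.Icc 1 (2*h-1)).filter
            (fun i => (Sum.inr (0, ⟨t, ht⟩, false) : LadderNode h 1) ∈ (ladderPath h i).tail)
          = (Finset.Icc 1 (2*h-1)).filter
            (fun i => (i % 2 = 1 ∧ i - 1 ≤ t) ∨ (¬ (i % 2 = 1) ∧ t < i)) := by
        apply Finset.filter_congr
        intro i hi
        rw [Finset.mem_Icc] at hi
        rw [Ladder.mem_ladderPath_tail hh i hi.1 hi.2 ht false]
        by_cases hpar : i % 2 = 1 <;> simp [hpar]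
      rw [hfe]
      exact Ladder.count_false h t hh ht
    · -- b = true
      have hfe : (Finset.Icc 1 (2*h-1)).filter
            (fun i => (Sum.inr (0, ⟨t, ht⟩, true) : LadderNode h 1) ∈ (ladderPath h i).tail)
          = (Finset.Icc 1 (2*h-1)).filter
            (fun i => (i % 2 = 1 ∧ t < i) ∨ (¬ (i % 2 = 1) ∧ i - 1 ≤ t)) := by
        apply Finset.filter_congr
        intro i hi
        rw [Finset.mem_Icc] at hi
        rw [Ladder.mem_ladderPath_tail hh i hi.1 hi.2 ht true]
        by_cases hpar : i % 2 = 1 <;> simp [hpar]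
      rw [hfe]
      exact Ladder.count_true h t hh ht
end

section
/- Let (V, c) be a finite metric space with |V| ≥ 2, let r ∈ V, and let D > 0. Extend the metric to V ∪ {r'} for a new node r' by setting c'(v, r') = c(v, r) + D for every v ∈ V (and c' = c on V). Then there exists a single path rooted at r in the extended metric that covers all nodes of (V \ {r}) ∪ {r'} and has regret at most D if and only if there exists a Hamiltonian cycle through all nodes of V of total length at most D. -/
/-- The metric on `V ∪ {r'}` extending `c`, where the new node `r'` (encoded as `none`)
satisfies `c'(v, r') = c(v, r) + D` for every `v ∈ V`. -/
def extMetric {α : Type*} (c : α → α → ℝ) (r : α) (D : ℝ) : Option α → Option α → ℝ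
  | some u, some v => c u v
  | some u, none => c u r + D
  | none, some v => c v r + D
  | none, none => 0

section helpers
variable {α : Type*} {β : Type*}

lemma pathCost_nonneg (c : α → α → ℝ) (hnn : ∀ u v, 0 ≤ c u v) :
    ∀ l : List α, 0 ≤ pathCost c l
  | [] => le_refl 0
  | [_] => le_refl 0
  | _ :: b :: l => add_nonneg (hnn _ _) (pathCost_nonneg c hnn (b :: l))

lemma pathCost_append_singleton (c : α → α → ℝ) (x d : α) :
    ∀ l : List α, l ≠ [] → pathCost c (l ++ [x]) = pathCost c l + c (l.getLastD d) x
  | [], h => absurd rfl h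
  | [a], _ => by simp [pathCost]
  | a :: b :: l, _ => by
      have ih := pathCost_append_singleton c x d (b :: l) (by simp)
      simp only [List.cons_append, pathCost, List.getLastD_cons, List.append_eq] at *
      rw [ih]; ring

lemma pathCost_append_cons (c : α → α → ℝ) (x : α) (l₂ : List α) :
    ∀ l₁ : List α, pathCost c (l₁ ++ x :: l₂) = pathCost c (l₁ ++ [x]) + pathCost c (x :: l₂)
  | [] => by simp [pathCost]
  | [a] => by simp [pathCost]
  | a :: b :: l => by
      have ih := pathCost_append_cons c x l₂ (b :: l)
      simp only [List.cons_append, pathCost, List.append_eq] at *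
      rw [ih]; ring

lemma chain_le (c : α → α → ℝ) (htri : ∀ u v w, c u v ≤ c u w + c w v)
    (hrefl : ∀ u, c u u = 0) :
    ∀ (l : List α) (a d : α), c a ((a :: l).getLastD d) ≤ pathCost c (a :: l)
  | [], a, d => by simp [pathCost, hrefl]
  | b :: t, a, d => by
      have ih := chain_le c htri hrefl t b a
      simp only [List.getLastD_cons, pathCost] at *
      calc c a (t.getLastD b) ≤ c a b + c b (t.getLastD b) := htri _ _ _
        _ ≤ c a b + pathCost c (b :: t) := by simp [pathCost] at ih ⊢; linarith

lemma getLastD_mem (a d : α) : ∀ l : List α, (a :: l).getLastD d ∈ a :: l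
  | [] => by simp
  | b :: t => by
      have := getLastD_mem b a t
      simp only [List.getLastD_cons] at *
      simpa using Or.inr this

lemma eq_map_some : ∀ {l : List (Option α)}, (none ∉ l) → (l.filterMap id).map some = l
  | [], _ => rfl
  | x :: t, h => by
      match x with
      | none => exact absurd (by simp) h
      | some u =>
          have := eq_map_some (l := t) (fun ht => h (by simp [ht]))
          simp [this]; exact this

lemma pathCost_map (c' : β → β → ℝ) (c : α → α → ℝ) (f : α → β)
    (hf : ∀ a b, c' (f a) (f b) = c a b) :
    ∀ l : List α, pathCost c' (l.map f) = pathCost c l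
  | [] => rfl
  | [_] => rfl
  | a :: b :: l => by
      have ih := pathCost_map c' c f hf (b :: l)
      simp only [List.map_cons, pathCost] at *
      rw [ih, hf]

lemma getLastD_map (f : α → β) : ∀ (l : List α) (d : α),
    (l.map f).getLastD (f d) = f (l.getLastD d)
  | [], d => rfl
  | a :: t, d => by
      have := getLastD_map f t a
      simp only [List.map_cons, List.getLastD_cons]
      exact this

lemma getLastD_append_cons (x : α) (l₂ : List α) :
    ∀ (l₁ : List α) (d : α), (l₁ ++ x :: l₂).getLastD d = (x :: l₂).getLastD d
  | [], d => rfl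
  | a :: t, d => by
      have := getLastD_append_cons x l₂ t a
      simp only [List.cons_append, List.getLastD_cons] at *
      rw [this]

lemma cycle_rot1 (c : α → α → ℝ) (r : α) (a : α) :
    ∀ m : List α,
      pathCost c ((a :: m) ++ [a]) = pathCost c ((m ++ [a]) ++ [(m ++ [a]).headD r])
  | [] => by simp
  | b :: m' => by
      have h1 : ((b :: m') ++ [a]).headD r = b := by simp
      rw [h1]
      have h2 := pathCost_append_singleton c b (a) ((b :: m') ++ [a]) (by simp)
      rw [h2, List.getLastD_concat]
      simp only [List.cons_append, pathCost, List.append_eq]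
      ring

lemma cycle_rot (c : α → α → ℝ) (r : α) (x : α) :
    ∀ (s t : List α),
      pathCost c ((s ++ x :: t) ++ [(s ++ x :: t).headD r]) =
        pathCost c ((x :: (t ++ s)) ++ [x])
  | [], t => by simp
  | a :: s', t => by
      have h1 : ((a :: s') ++ x :: t).headD r = a := by simp
      rw [h1]
      have h2 := cycle_rot1 c r a (s' ++ x :: t)
      have h3 : (s' ++ x :: t) ++ [a] = s' ++ x :: (t ++ [a]) := by simp
      have ih := cycle_rot c r x s' (t ++ [a])
      simp only [List.cons_append] at h2 ⊢
      rw [h2, h3, ih]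
      simp

end helpers

section extm
variable {α : Type*} (c : α → α → ℝ) (r : α) (D : ℝ)

lemma ext_nonneg (hnn : ∀ u v, 0 ≤ c u v) (hD : 0 ≤ D) :
    ∀ x y, 0 ≤ extMetric c r D x y := by
  rintro (_|u) (_|v) <;> simp only [extMetric] <;>
    first
      | exact le_refl 0
      | exact hnn _ _
      | exact add_nonneg (hnn _ _) hD

lemma ext_refl (hrefl : ∀ u, c u u = 0) : ∀ x, extMetric c r D x x = 0 := by
  rintro (_|u) <;> simp [extMetric, hrefl]

lemma ext_tri (hsymm : ∀ u v, c u v = c v u) (hnn : ∀ u v, 0 ≤ c u v)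
    (htri : ∀ u v w, c u v ≤ c u w + c w v) (hD : 0 ≤ D) :
    ∀ x y z, extMetric c r D x y ≤ extMetric c r D x z + extMetric c r D z y := by
  rintro (_|u) (_|v) (_|w) <;> simp only [extMetric]
  · linarith
  · linarith [hnn w r]
  · linarith
  · linarith [htri v r w, hsymm v w]
  · linarith
  · linarith [htri u r w]
  · linarith [htri u v r, hsymm r v, hnn u r, hnn v r]
  · exact htri u v w

end extm

/-- let `(V, c)` be a finite metric space with `|V| ≥ 2`, `r ∈ V`, `D > 0`, and
extend the metric to `V ∪ {r'}` by `c'(v, r') = c(v, r) + D`.  Then there is a single rooted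
path (rooted at `r`) in the extended metric covering all nodes of `(V \ {r}) ∪ {r'}` with
regret at most `D` iff there is a Hamiltonian cycle through all nodes of `V` of total length
at most `D`. -/
theorem single_path_iff_tsp {α : Type*} [Fintype α] [DecidableEq α]
    (c : α → α → ℝ)
    (hsymm : ∀ u v, c u v = c v u) (hnn : ∀ u v, 0 ≤ c u v)
    (htri : ∀ u v w, c u v ≤ c u w + c w v) (hrefl : ∀ u, c u u = 0)
    (hpos : ∀ u v, u ≠ v → 0 < c u v)
    (hcard : 2 ≤ Fintype.card α)
    (r : α) (D : ℝ) (hD : 0 < D) :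
    (∃ w : List (Option α),
        IsRootedPath (some r) w ∧
        (∀ v : α, v ≠ r → some v ∈ w.tail) ∧ (none ∈ w.tail) ∧
        pathRegret (extMetric c r D) (some r) w ≤ D) ↔
    (∃ l : List α, l ≠ [] ∧ l.Nodup ∧ (∀ v : α, v ∈ l) ∧
        pathCost c (l ++ [l.headD r]) ≤ D) := by
  
  have hDle : (0:ℝ) ≤ D := hD.le
  set c' : Option α → Option α → ℝ := extMetric c r D with hc'
  have hf : ∀ a b : α, c' (some a) (some b) = c a b := fun _ _ => rfl
  constructor
  · rintro ⟨w, ⟨hhead, hnodup⟩, hv, hnone, hreg⟩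
    cases w with
    | nil => simp at hhead
    | cons a tw =>
      have ha : a = some r := by simpa using hhead
      subst ha
      simp only [List.tail_cons] at hv hnone
      obtain ⟨t1, t2, rfl⟩ := List.append_of_mem hnone
      have hwshape : some r :: (t1 ++ none :: t2) = (some r :: t1) ++ none :: t2 := by simp
      have hnodup' : ((some r :: t1) ++ none :: t2).Nodup := by rw [← hwshape]; exact hnodup
      have hnA : (none : Option α) ∉ (some r :: t1) :=
        fun h => (List.nodup_append'.mp hnodup').2.2 h (by simp)
      cases t2 with
      | cons x t2' =>
        exfalso
        have hnd2 : (none :: x :: t2').Nodup := (List.nodup_append'.mp hnodup').2.1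
        obtain ⟨v, rfl⟩ : ∃ v, x = some v := by
          cases x with
          | none => simp at hnd2
          | some v => exact ⟨v, rfl⟩
        -- decompose the cost
        have e1 : pathCost c' (some r :: (t1 ++ none :: some v :: t2')) =
            pathCost c' ((some r :: t1) ++ [none]) + pathCost c' (none :: some v :: t2') := by
          rw [hwshape]; exact pathCost_append_cons c' none (some v :: t2') (some r :: t1)
        have e2 : pathCost c' ((some r :: t1) ++ [none]) =
            pathCost c' (some r :: t1) + c' ((some r :: t1).getLastD (some r)) none :=
          pathCost_append_singleton c' none (some r) (some r :: t1) (by simp)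
        obtain ⟨u, hu⟩ : ∃ u, (some r :: t1).getLastD (some r) = some u := by
          cases h : (some r :: t1).getLastD (some r) with
          | none => exact absurd (h ▸ getLastD_mem (some r) (some r) t1) hnA
          | some u => exact ⟨u, rfl⟩
        have e3 : pathCost c' (none :: some v :: t2') =
            (c v r + D) + pathCost c' (some v :: t2') := by
          simp [pathCost, hc', extMetric]
        have hchain := chain_le c' (ext_tri c r D hsymm hnn htri hDle)
          (ext_refl c r D hrefl) (some v :: t2') (some r) (some r)
        have e4 : pathCost c' (some r :: some v :: t2') =
            c r v + pathCost c' (some v :: t2') := by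
          simp [pathCost, hc', extMetric]
        rw [List.getLastD_cons, List.getLastD_cons, e4] at hchain
        have hA0 : 0 ≤ pathCost c' (some r :: t1) :=
          pathCost_nonneg c' (ext_nonneg c r D hnn hDle) _
        have hP0 : 0 ≤ pathCost c' (some v :: t2') :=
          pathCost_nonneg c' (ext_nonneg c r D hnn hDle) _
        have hL : (some r :: (t1 ++ none :: some v :: t2')).getLastD (some r) =
            t2'.getLastD (some v) := by
          rw [List.getLastD_cons, getLastD_append_cons, List.getLastD_cons, List.getLastD_cons]
        simp only [pathRegret, hL, e1, e2, e3, hu] at hreg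
        have hcu : c' (some u) none = c u r + D := rfl
        rw [hcu] at hreg
        have hs : c v r = c r v := hsymm v r
        have hun : 0 ≤ c u r := hnn u r
        linarith
      | nil =>
        have hAnd : (some r :: t1).Nodup := (List.nodup_append'.mp hnodup').1
        set l : List α := (some r :: t1).filterMap id with hl
        have hmap : l.map some = some r :: t1 := eq_map_some hnA
        have hlr : l = r :: t1.filterMap id := by simp [hl]
        refine ⟨l, by simp [hlr], List.Nodup.of_map some (hmap ▸ hAnd), ?_, ?_⟩
        · intro v
          by_cases hvr : v = r
          · rw [hlr, hvr]; exact List.mem_cons_self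
          · have hm := hv v hvr
            have : some v ∈ t1 := by
              rcases List.mem_append.mp hm with h | h
              · exact h
              · simp at h
            have : some v ∈ l.map some := by rw [hmap]; exact List.mem_cons_of_mem _ this
            obtain ⟨v', hv', he⟩ := List.mem_map.mp this
            rwa [← Option.some_injective α he]
        · have hld : l.headD r = r := by rw [hlr]; rfl
          rw [hld]
          have e5 : pathCost c (l ++ [r]) = pathCost c l + c (l.getLastD r) r :=
            pathCost_append_singleton c r r l (by rw [hlr]; simp)
          -- compute the regret
          have e1 : pathCost c' (some r :: (t1 ++ [none])) =
              pathCost c' (some r :: t1) + c' ((some r :: t1).getLastD (some r)) none := by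
            rw [show some r :: (t1 ++ [none]) = (some r :: t1) ++ [none] by simp]
            exact pathCost_append_singleton c' none (some r) (some r :: t1) (by simp)
          have e2 : pathCost c' (some r :: t1) = pathCost c l := by
            rw [← hmap]; exact pathCost_map c' c some hf _
          have e3 : (some r :: t1).getLastD (some r) = some (l.getLastD r) := by
            rw [← hmap]; exact getLastD_map some l r
          have e4 : (some r :: (t1 ++ [none])).getLastD (some r) = none := by
            rw [List.getLastD_cons, List.getLastD_concat]
          simp only [pathRegret, e4, e1, e2, e3] at hreg
          have h6 : c' (some (l.getLastD r)) none = c (l.getLastD r) r + D := rfl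
          have h7 : c' (some r) none = c r r + D := rfl
          rw [h6, h7, hrefl r] at hreg
          linarith
  · rintro ⟨l, hne, hnd, hall, hcost⟩
    obtain ⟨s, t, rfl⟩ := List.append_of_mem (hall r)
    have hrot := cycle_rot c r r s t
    rw [hrot] at hcost
    have hperm : (s ++ r :: t).Perm (r :: (t ++ s)) := by
      have h := List.perm_append_comm (l₁ := s) (l₂ := r :: t)
      simpa using h
    set l' : List α := r :: (t ++ s) with hl'
    have hnd' : l'.Nodup := hperm.nodup_iff.mp hnd
    have hall' : ∀ v, v ∈ l' := fun v => hperm.mem_iff.mp (hall v)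
    refine ⟨l'.map some ++ [none], ⟨by simp [hl'], ?_⟩, ?_, ?_, ?_⟩
    · rw [List.nodup_append']
      refine ⟨hnd'.map (Option.some_injective α), by simp, ?_⟩
      intro a ha hb
      simp only [List.mem_singleton] at hb
      subst hb
      simp at ha
    · intro v hvr
      have hvm : v ∈ t ++ s := by
        rcases List.mem_cons.mp (hall' v) with h | h
        · exact absurd h hvr
        · exact h
      have : l'.map some ++ [none] = some r :: ((t ++ s).map some ++ [none]) := by
        simp [hl']
      rw [this, List.tail_cons]
      exact List.mem_append_left _ (List.mem_map_of_mem (f := some) hvm)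
    · have : l'.map some ++ [none] = some r :: ((t ++ s).map some ++ [none]) := by
        simp [hl']
      rw [this, List.tail_cons]
      exact List.mem_append_right _ (by simp)
    · have e1 : pathCost c' (l'.map some ++ [none]) =
          pathCost c' (l'.map some) + c' ((l'.map some).getLastD (some r)) none :=
        pathCost_append_singleton c' none (some r) (l'.map some) (by simp [hl'])
      have e2 : pathCost c' (l'.map some) = pathCost c l' := pathCost_map c' c some hf _
      have e3 : (l'.map some).getLastD (some r) = some (l'.getLastD r) := getLastD_map some l' r
      have e4 : (l'.map some ++ [none]).getLastD (some r) = none := List.getLastD_concat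
      have e5 : pathCost c (l' ++ [r]) = pathCost c l' + c (l'.getLastD r) r :=
        pathCost_append_singleton c r r l' (by simp [hl'])
      have hcost' : pathCost c (l' ++ [r]) ≤ D := hcost
      simp only [pathRegret, e4, e1, e2, e3]
      have h6 : c' (some (l'.getLastD r)) none = c (l'.getLastD r) r + D := rfl
      have h7 : c' (some r) none = c r r + D := rfl
      rw [h6, h7, hrefl r]
      linarith
end
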